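/- Let T be a commutative ring, let R be a T-algebra whose underlying ring is local, let n ≥ 1, and let K = M(n,R) be the full n×n matrix algebra over R. Then every T-algebra automorphism φ of K is a product of an inner automorphism and a ring automorphism: there exist an invertible matrix u ∈ K and a T-algebra automorphism α of R such that φ(A) = u · ᾱ(A) · u⁻¹ for all A ∈ K, where ᾱ(A) is obtained by applying α to every entry of A. -/

import Mathlib

section LocalLemmas
variable {R : Type*} [Ring R] [IsLocalRing R]

lemma locUnit_or_one_sub (a : R) : IsUnit a ∨ IsUnit (1 - a) :=
  IsLocalRing.isUnit_or_isUnit_of_add_one (add_sub_cancel a 1)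

/-- In a local ring, a one-sided inverse is two-sided. -/
lemma loc_mul_eq_one_comm {s t : R} (h : s * t = 1) : t * s = 1 := by
  rcases locUnit_or_one_sub (t * s) with hu | hu
  · have h2 : (t * s) * (t * s) = (t * s) * 1 := by
      rw [mul_one, mul_assoc t s (t * s), ← mul_assoc s t s, h, one_mul]
    exact (hu.mul_left_cancel h2)
  · exfalso
    have h3 : (1 - t * s) * t = (1 - t * s) * 0 := by
      rw [mul_zero, sub_mul, one_mul, mul_assoc, h, mul_one, sub_self]
    have ht0 : t = 0 := hu.mul_left_cancel h3
    rw [ht0, mul_zero] at h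
    exact zero_ne_one h

lemma locUnit_left_of_mul {a b : R} (h : IsUnit (a * b)) : IsUnit a := by
  obtain ⟨v, hv⟩ := h
  have h1 : a * (b * ↑v⁻¹) = 1 := by
    rw [← mul_assoc, ← hv, Units.mul_inv]
  have h2 : (b * ↑v⁻¹) * a = 1 := loc_mul_eq_one_comm h1
  exact ⟨⟨a, b * ↑v⁻¹, h1, h2⟩, rfl⟩

lemma locUnit_right_of_mul {a b : R} (h : IsUnit (a * b)) : IsUnit b := by
  obtain ⟨ua, hua⟩ := locUnit_left_of_mul h
  have hb : b = ↑ua⁻¹ * (a * b) := by rw [← mul_assoc, ← hua, Units.inv_mul, one_mul]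
  rw [hb]
  exact (ua⁻¹.isUnit).mul h

lemma loc_not_isUnit_mul_mul {x : R} (a b : R) (hx : ¬ IsUnit x) :
    ¬ IsUnit (a * x * b) := fun h =>
  hx (locUnit_right_of_mul (locUnit_left_of_mul h))

lemma loc_nonunits_add {a b : R} (ha : ¬ IsUnit a) (hb : ¬ IsUnit b) : ¬ IsUnit (a + b) := by
  intro h
  obtain ⟨u, hu⟩ := h
  have key : ↑u⁻¹ * a + ↑u⁻¹ * b = 1 := by
    rw [← mul_add, ← hu, Units.inv_mul]
  rcases IsLocalRing.isUnit_or_isUnit_of_add_one key with h' | h'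
  · exact ha (locUnit_right_of_mul h')
  · exact hb (locUnit_right_of_mul h')

lemma loc_not_isUnit_sum {ι : Type*} (s : Finset ι) (f : ι → R)
    (h : ∀ i ∈ s, ¬ IsUnit (f i)) : ¬ IsUnit (∑ i ∈ s, f i) := by
  classical
  induction s using Finset.induction_on with
  | empty => simpa using not_isUnit_zero
  | @insert a s' ha ih =>
    rw [Finset.sum_insert ha]
    exact loc_nonunits_add (h a (Finset.mem_insert_self a s'))
      (ih fun i hi => h i (Finset.mem_insert_of_mem hi))

end LocalLemmas

section MatrixDF
variable {R : Type*} [Ring R] [IsLocalRing R]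

open Matrix

lemma matrix_isUnit_of_left_inverse :
    ∀ (n : ℕ) (s t : Matrix (Fin n) (Fin n) R), s * t = 1 → IsUnit t := by
  intro n
  induction n with
  | zero =>
    intro s t _
    exact ⟨⟨t, t, Subsingleton.elim _ _, Subsingleton.elim _ _⟩, rfl⟩
  | succ n ih =>
    intro s t h
    classical
    -- find a unit in the first column of t
    have h00 : (1 : Matrix (Fin (n+1)) (Fin (n+1)) R) 0 0 = ∑ c, s 0 c * t c 0 := by
      rw [← h, Matrix.mul_apply]
    have hex : ∃ k, IsUnit (s 0 k * t k 0) := by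
      by_contra hc
      push_neg at hc
      have hne := loc_not_isUnit_sum Finset.univ (fun c => s 0 c * t c 0) (fun i _ => hc i)
      rw [← h00, Matrix.one_apply_eq] at hne
      exact hne isUnit_one
    obtain ⟨k, hk⟩ := hex
    obtain ⟨w, hw⟩ := locUnit_right_of_mul hk
    -- swap rows 0 and k
    set σ : Equiv.Perm (Fin (n+1)) := Equiv.swap 0 k with hσ
    set P : Matrix (Fin (n+1)) (Fin (n+1)) R := (1 : Matrix _ _ R).submatrix σ id with hP
    have hPmul : ∀ M : Matrix (Fin (n+1)) (Fin (n+1)) R, P * M = M.submatrix σ id := by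
      intro M
      ext a b
      simp [hP, Matrix.mul_apply, Matrix.one_apply, ite_mul, Matrix.submatrix_apply]
    have hPP : P * P = 1 := by
      rw [hPmul]
      ext a b
      simp [hP, Matrix.submatrix_apply, Matrix.one_apply, Equiv.swap_apply_self, hσ]
    set t₁ : Matrix (Fin (n+1)) (Fin (n+1)) R := P * t with ht₁
    set s₁ : Matrix (Fin (n+1)) (Fin (n+1)) R := s * P with hs₁
    have hst₁ : s₁ * t₁ = 1 := by
      rw [hs₁, ht₁, mul_assoc, ← mul_assoc P P t, hPP, one_mul, h]
    have h10 : t₁ 0 0 = ↑w := by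
      rw [ht₁, hPmul, Matrix.submatrix_apply, hσ, Equiv.swap_apply_left, id, hw]
    -- clear the first column below the pivot
    set d : Fin (n+1) → R := fun i => if i = 0 then 0 else t₁ i 0 * ↑w⁻¹ with hd
    set y : Matrix (Fin (n+1)) (Fin (n+1)) R := Matrix.of fun i j => if j = 0 then d i else 0
      with hy
    have hyy : y * y = 0 := by
      ext a b
      rw [Matrix.mul_apply]
      have : ∀ c, y a c * y c b = 0 := by
        intro c
        by_cases hc : c = 0
        · subst hc
          simp [hy, hd]
        · simp [hy, hc]
      simp [this]
    have hLL : (1 - y) * (1 + y) = 1 := by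
      have hexp : (1 - y) * (1 + y) = 1 - y * y := by noncomm_ring
      rw [hexp, hyy, sub_zero]
    have hLL' : (1 + y) * (1 - y) = 1 := by
      have hexp : (1 + y) * (1 - y) = 1 - y * y := by noncomm_ring
      rw [hexp, hyy, sub_zero]
    set t₂ : Matrix (Fin (n+1)) (Fin (n+1)) R := (1 - y) * t₁ with ht₂
    have hyt : ∀ i, (y * t₁) i 0 = d i * t₁ 0 0 := by
      intro i
      rw [Matrix.mul_apply]
      rw [Finset.sum_eq_single 0]
      · simp [hy]
      · intro c _ hc
        simp [hy, hc]
      · simp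
    have ht₂col : ∀ i, i ≠ 0 → t₂ i 0 = 0 := by
      intro i hi
      rw [ht₂, Matrix.sub_mul, one_mul, Matrix.sub_apply, hyt, h10, hd]
      simp only [hi, if_false]
      rw [Units.inv_mul_cancel_right, sub_self]
    have ht₂00 : t₂ 0 0 = ↑w := by
      rw [ht₂, Matrix.sub_mul, one_mul, Matrix.sub_apply, hyt, h10, hd]
      simp
    -- clear the first row right of the pivot
    set e : Fin (n+1) → R := fun j => if j = 0 then 0 else ↑w⁻¹ * t₂ 0 j with he
    set z : Matrix (Fin (n+1)) (Fin (n+1)) R := Matrix.of fun i j => if i = 0 then e j else 0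
      with hz
    have hzz : z * z = 0 := by
      ext a b
      rw [Matrix.mul_apply]
      have : ∀ c, z a c * z c b = 0 := by
        intro c
        by_cases hc : c = 0
        · subst hc
          simp [hz, he]
        · simp [hz, hc]
      simp [this]
    have hUU : (1 - z) * (1 + z) = 1 := by
      have hexp : (1 - z) * (1 + z) = 1 - z * z := by noncomm_ring
      rw [hexp, hzz, sub_zero]
    have hUU' : (1 + z) * (1 - z) = 1 := by
      have hexp : (1 + z) * (1 - z) = 1 - z * z := by noncomm_ring
      rw [hexp, hzz, sub_zero]
    set t₃ : Matrix (Fin (n+1)) (Fin (n+1)) R := t₂ * (1 - z) with ht₃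
    have htz : ∀ j, (t₂ * z) 0 j = t₂ 0 0 * e j := by
      intro j
      rw [Matrix.mul_apply]
      rw [Finset.sum_eq_single 0]
      · simp [hz]
      · intro c _ hc
        simp [hz, hc]
      · simp
    have htz' : ∀ i j, (t₂ * z) i j = t₂ i 0 * e j := by
      intro i j
      rw [Matrix.mul_apply]
      rw [Finset.sum_eq_single 0]
      · simp [hz]
      · intro c _ hc
        simp [hz, hc]
      · simp
    have ht₃row : ∀ j, j ≠ 0 → t₃ 0 j = 0 := by
      intro j hj
      rw [ht₃, Matrix.mul_sub, mul_one, Matrix.sub_apply, htz, ht₂00, he]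
      simp only [hj, if_false]
      rw [Units.mul_inv_cancel_left, sub_self]
    have ht₃col : ∀ i, i ≠ 0 → t₃ i 0 = 0 := by
      intro i hi
      rw [ht₃, Matrix.mul_sub, mul_one, Matrix.sub_apply, htz', he]
      simp only [if_pos rfl, if_true, mul_zero, sub_zero]
      exact ht₂col i hi
    have ht₃00 : t₃ 0 0 = ↑w := by
      rw [ht₃, Matrix.mul_sub, mul_one, Matrix.sub_apply, htz', he]
      simp only [if_pos rfl, if_true, mul_zero, sub_zero]
      exact ht₂00
    set s₃ : Matrix (Fin (n+1)) (Fin (n+1)) R := (1 + z) * s₁ * (1 + y) with hs₃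
    have hst₃ : s₃ * t₃ = 1 := by
      rw [hs₃, ht₃, ht₂]
      calc (1 + z) * s₁ * (1 + y) * ((1 - y) * t₁ * (1 - z))
          = (1 + z) * (s₁ * (((1 + y) * (1 - y)) * t₁)) * (1 - z) := by
            simp only [mul_assoc]
        _ = 1 := by rw [hLL', one_mul, hst₁, mul_one, hUU']
    -- pass to the minor
    set t₄ : Matrix (Fin n) (Fin n) R := t₃.submatrix Fin.succ Fin.succ with ht₄
    set s₄ : Matrix (Fin n) (Fin n) R := s₃.submatrix Fin.succ Fin.succ with hs₄
    have hst₄ : s₄ * t₄ = 1 := by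
      ext i j
      have hentry := congrFun (congrFun hst₃ i.succ) j.succ
      rw [Matrix.mul_apply, Fin.sum_univ_succ, ht₃row j.succ (Fin.succ_ne_zero j), mul_zero,
        zero_add] at hentry
      rw [Matrix.mul_apply]
      simp only [hs₄, ht₄, Matrix.submatrix_apply]
      rw [hentry]
      rw [Matrix.one_apply, Matrix.one_apply]
      simp [Fin.succ_inj]
    obtain ⟨u₄, hu₄⟩ := ih s₄ t₄ hst₄
    -- reassemble an inverse for t₃
    set v : Matrix (Fin n) (Fin n) R := Units.val u₄⁻¹ with hv
    have hv1 : t₄ * v = 1 := by rw [hv, ← hu₄]; exact u₄.mul_inv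
    have hv2 : v * t₄ = 1 := by rw [hv, ← hu₄]; exact u₄.inv_mul
    set V : Matrix (Fin (n+1)) (Fin (n+1)) R :=
      Matrix.of fun a b =>
        Fin.cases (Fin.cases ((↑w⁻¹ : R)) (fun _ => 0) b)
          (fun i => Fin.cases 0 (fun j => v i j) b) a with hV
    have hV00 : V 0 0 = (↑w⁻¹ : R) := rfl
    have hV0s : ∀ j : Fin n, V 0 j.succ = 0 := fun j => by simp [hV]
    have hVs0 : ∀ i : Fin n, V i.succ 0 = 0 := fun i => by simp [hV]
    have hVss : ∀ i j : Fin n, V i.succ j.succ = v i j := fun i j => by simp [hV]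
    have htV : t₃ * V = 1 := by
      ext a b
      rw [Matrix.mul_apply, Fin.sum_univ_succ]
      induction b using Fin.cases with
      | zero =>
        rw [hV00]
        have hrest : ∀ c : Fin n, t₃ a c.succ * V c.succ 0 = 0 := by
          intro c; rw [hVs0, mul_zero]
        rw [Finset.sum_congr rfl (fun c _ => hrest c), Finset.sum_const_zero, add_zero]
        induction a using Fin.cases with
        | zero => rw [ht₃00, Units.mul_inv, Matrix.one_apply_eq]
        | succ i =>
          rw [ht₃col i.succ (Fin.succ_ne_zero i), zero_mul,
            Matrix.one_apply_ne (Fin.succ_ne_zero i)]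
      | succ j =>
        rw [hV0s j, mul_zero, zero_add]
        induction a using Fin.cases with
        | zero =>
          have hrest : ∀ c : Fin n, t₃ 0 c.succ * V c.succ j.succ = 0 := by
            intro c; rw [ht₃row c.succ (Fin.succ_ne_zero c), zero_mul]
          rw [Finset.sum_congr rfl (fun c _ => hrest c), Finset.sum_const_zero,
            Matrix.one_apply_ne (Fin.succ_ne_zero j).symm]
        | succ i =>
          have hrest : ∀ c : Fin n, t₃ i.succ c.succ * V c.succ j.succ = t₄ i c * v c j := by
            intro c; rw [hVss, ht₄, Matrix.submatrix_apply]
          rw [Finset.sum_congr rfl (fun c _ => hrest c), ← Matrix.mul_apply, hv1,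
            Matrix.one_apply, Matrix.one_apply]
          simp [Fin.succ_inj]
    have hVt : V * t₃ = 1 := by
      ext a b
      rw [Matrix.mul_apply, Fin.sum_univ_succ]
      induction b using Fin.cases with
      | zero =>
        have hrest : ∀ c : Fin n, V a c.succ * t₃ c.succ 0 = 0 := by
          intro c; rw [ht₃col c.succ (Fin.succ_ne_zero c), mul_zero]
        rw [Finset.sum_congr rfl (fun c _ => hrest c), Finset.sum_const_zero, add_zero]
        induction a using Fin.cases with
        | zero => rw [hV00, ht₃00, Units.inv_mul, Matrix.one_apply_eq]
        | succ i =>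
          rw [hVs0, zero_mul, Matrix.one_apply_ne (Fin.succ_ne_zero i)]
      | succ j =>
        induction a using Fin.cases with
        | zero =>
          rw [hV00]
          rw [ht₃row j.succ (Fin.succ_ne_zero j), mul_zero, zero_add]
          have hrest : ∀ c : Fin n, V 0 c.succ * t₃ c.succ j.succ = 0 := by
            intro c; rw [hV0s, zero_mul]
          rw [Finset.sum_congr rfl (fun c _ => hrest c), Finset.sum_const_zero,
            Matrix.one_apply_ne (Fin.succ_ne_zero j).symm]
        | succ i =>
          rw [hVs0, zero_mul, zero_add]
          have hrest : ∀ c : Fin n, V i.succ c.succ * t₃ c.succ j.succ = v i c * t₄ c j := by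
            intro c; rw [hVss, ht₄, Matrix.submatrix_apply]
          rw [Finset.sum_congr rfl (fun c _ => hrest c), ← Matrix.mul_apply, hv2,
            Matrix.one_apply, Matrix.one_apply]
          simp [Fin.succ_inj]
    have hUt₃ : IsUnit t₃ := ⟨⟨t₃, V, htV, hVt⟩, rfl⟩
    -- unravel: t = P * ((1+y) * (t₃ * (1+z)))
    have ht₂' : t₂ = t₃ * (1 + z) := by
      rw [ht₃, mul_assoc, hUU, mul_one]
    have ht₁' : t₁ = (1 + y) * t₂ := by
      rw [ht₂, ← mul_assoc, hLL', one_mul]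
    have ht' : t = P * t₁ := by
      rw [ht₁, ← mul_assoc, hPP, one_mul]
    have hUP : IsUnit P := ⟨⟨P, P, hPP, hPP⟩, rfl⟩
    have hUy : IsUnit (1 + y : Matrix (Fin (n+1)) (Fin (n+1)) R) := ⟨⟨1 + y, 1 - y, hLL', hLL⟩, rfl⟩
    have hUz : IsUnit (1 + z : Matrix (Fin (n+1)) (Fin (n+1)) R) := ⟨⟨1 + z, 1 - z, hUU', hUU⟩, rfl⟩
    rw [ht', ht₁', ht₂']
    exact hUP.mul (hUy.mul (hUt₃.mul hUz))

end MatrixDF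

section MainAux
variable {R : Type*} [Ring R]

open Matrix

lemma sum_stdBasis_diag_eq_one (n : ℕ) :
    ∑ i : Fin n, Matrix.single i i (1 : R) = 1 := by
  ext a b
  rw [Matrix.sum_apply]
  by_cases hab : a = b
  · subst hab
    rw [Matrix.one_apply_eq, Finset.sum_eq_single a]
    · simp
    · intro c _ hc
      simp [Matrix.single_apply_of_ne, hc]
    · simp
  · rw [Matrix.one_apply_ne hab]
    apply Finset.sum_eq_zero
    intro c _
    apply Matrix.single_apply_of_ne
    rintro ⟨rfl, rfl⟩
    exact hab rfl

lemma stdBasis_eq_scalar_mul {n : ℕ} (i j : Fin n) (r : R) :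
    Matrix.single i j r = Matrix.scalar (Fin n) r * Matrix.single i j 1 := by
  ext a b
  rw [Matrix.scalar_apply, Matrix.diagonal_mul]
  by_cases h : i = a ∧ j = b
  · obtain ⟨rfl, rfl⟩ := h
    simp [Matrix.single]
  · rw [Matrix.single_apply_of_ne _ _ _ _ _ h, Matrix.single_apply_of_ne _ _ _ _ _ h,
      mul_zero]

lemma scalar_comm_stdBasis {n : ℕ} (i j : Fin n) (r : R) :
    Matrix.scalar (Fin n) r * Matrix.single i j 1 = Matrix.single i j 1 * Matrix.scalar (Fin n) r := by
  ext a b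
  rw [Matrix.scalar_apply, Matrix.diagonal_mul, Matrix.mul_diagonal]
  by_cases h : i = a ∧ j = b
  · obtain ⟨rfl, rfl⟩ := h
    simp
  · rw [Matrix.single_apply_of_ne _ _ _ _ _ h, mul_zero, zero_mul]

lemma sandwich {n : ℕ} (M : Matrix (Fin n) (Fin n) R) (k l : Fin n) :
    ∑ i : Fin n, Matrix.single i k (1 : R) * M * Matrix.single l i 1
      = Matrix.scalar (Fin n) (M k l) := by
  ext a b
  rw [Matrix.sum_apply]
  have hterm : ∀ i : Fin n, ((Matrix.single i k (1 : R) * M * Matrix.single l i 1 :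
        Matrix (Fin n) (Fin n) R)) a b
      = if a = i ∧ b = i then M k l else 0 := by
    intro i
    by_cases hb : b = i
    · subst hb
      rw [Matrix.mul_single_apply_same]
      by_cases ha : a = b
      · subst ha
        rw [Matrix.single_mul_apply_same]
        simp
      · rw [Matrix.single_mul_apply_of_ne 1 b k a l ha]
        simp [ha]
    · rw [Matrix.mul_single_apply_of_ne 1 l i a b hb]
      simp [hb]
  rw [Finset.sum_congr rfl (fun i _ => hterm i)]
  rw [Matrix.scalar_apply, Matrix.diagonal_apply]
  by_cases hab : a = b
  · subst hab
    rw [Finset.sum_eq_single a]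
    · simp
    · intro c _ hc
      simp [Ne.symm hc]  -- a = c ∧ a = c false since c ≠ a... careful
    · simp
  · rw [if_neg hab]
    apply Finset.sum_eq_zero
    intro c _
    rw [if_neg]
    rintro ⟨rfl, rfl⟩
    exact hab rfl

lemma central_of_comm_stdBasis {n : ℕ} (x : Matrix (Fin n) (Fin n) R) (i0 : Fin n)
    (h : ∀ i j, x * Matrix.single i j (1 : R) = Matrix.single i j 1 * x) :
    x = Matrix.scalar (Fin n) (x i0 i0) := by
  have key : ∀ (a j c : Fin n), x a j = if a = j then x c c else 0 := by
    intro a j c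
    have h2 := congrFun (congrFun (h j c) a) c
    rw [Matrix.mul_single_apply_same] at h2
    by_cases haj : a = j
    · subst haj
      rw [Matrix.single_mul_apply_same] at h2
      simpa using h2
    · rw [Matrix.single_mul_apply_of_ne 1 j c a c haj] at h2
      simp only [haj, if_false]
      simpa using h2
  ext a b
  rw [Matrix.scalar_apply, Matrix.diagonal_apply, key a b i0]

end MainAux

open Matrix

/-- If `R` is a `T`-algebra whose underlying ring is local, every `T`-algebra automorphism
of the full matrix algebra `M(n,R)` is a product of an inner automorphism and a ring
automorphism (one induced entrywise by an automorphism of `R`). -/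
theorem stmt15 (T R : Type*) [CommRing T] [Ring R] [Algebra T R] [IsLocalRing R]
    (n : ℕ) (hn : 1 ≤ n)
    (φ : Matrix (Fin n) (Fin n) R ≃ₐ[T] Matrix (Fin n) (Fin n) R) :
    ∃ (u : (Matrix (Fin n) (Fin n) R)ˣ) (α : R ≃ₐ[T] R),
      ∀ A : Matrix (Fin n) (Fin n) R, φ A = Units.val u * A.map ⇑α * Units.val u⁻¹ := by
  classical
  haveI : NeZero n := ⟨Nat.one_le_iff_ne_zero.mp hn⟩
  haveI : Nonempty (Fin n) := ⟨0⟩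
  set E : Fin n → Fin n → Matrix (Fin n) (Fin n) R :=
    fun i j => Matrix.single i j 1 with hEdef
  set f : Fin n → Fin n → Matrix (Fin n) (Fin n) R := fun i j => φ (E i j) with hfdef
  have hE : ∀ i j j' l, E i j * E j' l = if j = j' then E i l else 0 := by
    intro i j j' l
    by_cases h : j = j'
    · subst h
      simp [hEdef]
    · simp [hEdef, h]
  have hf : ∀ i j j' l, f i j * f j' l = if j = j' then f i l else 0 := by
    intro i j j' l
    rw [hfdef]
    simp only []
    rw [← _root_.map_mul, hE]
    by_cases h : j = j'
    · simp [h]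
    · simp [h]
  -- Step 1: some entry of f 0 0 is a unit
  have hex : ∃ k l, IsUnit (f 0 0 k l) := by
    by_contra hc
    push_neg at hc
    have h1 : (1 : Matrix (Fin n) (Fin n) R) = ∑ i, f i 0 * f 0 0 * f 0 i := by
      have hsum : ∑ i, f i i = (1 : Matrix (Fin n) (Fin n) R) := by
        rw [hfdef]
        simp only []
        rw [← _root_.map_sum, sum_stdBasis_diag_eq_one, _root_.map_one]
      rw [← hsum]
      apply Finset.sum_congr rfl
      intro i _
      rw [hf i 0 0 0, if_pos rfl, hf i 0 0 i, if_pos rfl]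
    have h2 : ¬ IsUnit ((1 : Matrix (Fin n) (Fin n) R) 0 0) := by
      rw [h1, Matrix.sum_apply]
      apply loc_not_isUnit_sum
      intro i _
      rw [Matrix.mul_apply]
      apply loc_not_isUnit_sum
      intro b _
      rw [Matrix.mul_apply, Finset.sum_mul]
      apply loc_not_isUnit_sum
      intro a _
      exact loc_not_isUnit_mul_mul _ _ (hc a b)
    rw [Matrix.one_apply_eq] at h2
    exact h2 isUnit_one
  obtain ⟨k, l, hw⟩ := hex
  -- Step 2: an intertwiner between the two systems of matrix units
  set t : Matrix (Fin n) (Fin n) R := ∑ i, f i 0 * E l i with htdef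
  have hint : ∀ i j, f i j * t = t * E i j := by
    intro i j
    rw [htdef, Finset.mul_sum, Finset.sum_mul]
    have lhs_eq : ∀ i', f i j * (f i' 0 * E l i') = if j = i' then f i 0 * E l i' else 0 := by
      intro i'
      rw [← mul_assoc, hf i j i' 0]
      by_cases h : j = i' <;> simp [h]
    have rhs_eq : ∀ i', (f i' 0 * E l i') * E i j = if i' = i then f i' 0 * E l j else 0 := by
      intro i'
      rw [mul_assoc, hE l i' i j]
      by_cases h : i' = i <;> simp [h]
    rw [Finset.sum_congr rfl (fun i' _ => lhs_eq i'),
      Finset.sum_congr rfl (fun i' _ => rhs_eq i')]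
    simp
  set s : Matrix (Fin n) (Fin n) R := ∑ i, E i k * f 0 i with hsdef
  have hst : s * t = Matrix.scalar (Fin n) (f 0 0 k l) := by
    rw [hsdef, htdef, Finset.sum_mul]
    have outer : ∀ i, (E i k * f 0 i) * (∑ i', f i' 0 * E l i') = E i k * f 0 0 * E l i := by
      intro i
      rw [Finset.mul_sum]
      have term : ∀ i', (E i k * f 0 i) * (f i' 0 * E l i')
          = if i = i' then E i k * f 0 0 * E l i' else 0 := by
        intro i'
        have hassoc : (E i k * f 0 i) * (f i' 0 * E l i')
            = E i k * (f 0 i * f i' 0) * E l i' := by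
          simp only [mul_assoc]
        rw [hassoc, hf 0 i i' 0]
        by_cases h : i = i' <;> simp [h]
      rw [Finset.sum_congr rfl (fun i' _ => term i')]
      simp
    rw [Finset.sum_congr rfl (fun i _ => outer i), sandwich]
  have hWu : IsUnit (Matrix.scalar (Fin n) (f 0 0 k l)) := hw.map (Matrix.scalar (Fin n))
  obtain ⟨W, hWdef⟩ := hWu
  have hs0 : (Units.val W⁻¹ * s) * t = 1 := by
    rw [mul_assoc, hst, ← hWdef]
    exact W.inv_mul
  obtain ⟨u, hu⟩ := matrix_isUnit_of_left_inverse n (Units.val W⁻¹ * s) t hs0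
  -- abbreviations for the unit and its inverse
  set U : Matrix (Fin n) (Fin n) R := Units.val u with hUdef
  set Ui : Matrix (Fin n) (Fin n) R := Units.val u⁻¹ with hUidef
  have hUUi : U * Ui = 1 := u.mul_inv
  have hUiU : Ui * U = 1 := u.inv_mul
  -- conjugation identity for the matrix units
  have hconj : ∀ i j, f i j = U * E i j * Ui := by
    intro i j
    have h1 : f i j * U = U * E i j := by
      rw [hu]; exact hint i j
    calc f i j = f i j * (U * Ui) := by rw [hUUi, mul_one]
      _ = (f i j * U) * Ui := by rw [mul_assoc]
      _ = U * E i j * Ui := by rw [h1]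
  -- the induced map on R
  set αf : R → R := fun r => (Ui * φ (Matrix.scalar (Fin n) r) * U) 0 0 with hαfdef
  have hcommα : ∀ (r : R) (i j : Fin n),
      (Ui * φ (Matrix.scalar (Fin n) r) * U) * Matrix.single i j (1 : R)
        = Matrix.single i j (1 : R) * (Ui * φ (Matrix.scalar (Fin n) r) * U) := by
    intro r i j
    have e1 : U * E i j = f i j * U := by
      rw [hconj i j, mul_assoc, hUiU, mul_one]
    have e2 : Ui * f i j = E i j * Ui := by
      rw [hconj i j, ← mul_assoc, ← mul_assoc, hUiU, one_mul]
    have eE : Matrix.single i j (1 : R) = E i j := by rw [hEdef]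
    rw [eE]
    calc (Ui * φ (Matrix.scalar (Fin n) r) * U) * E i j
        = Ui * (φ (Matrix.scalar (Fin n) r) * (U * E i j)) := by simp only [mul_assoc]
      _ = Ui * (φ (Matrix.scalar (Fin n) r) * (f i j * U)) := by rw [e1]
      _ = Ui * ((φ (Matrix.scalar (Fin n) r) * f i j) * U) := by simp only [mul_assoc]
      _ = Ui * ((φ (Matrix.scalar (Fin n) r * E i j)) * U) := by
          rw [hfdef]; simp only []; rw [← _root_.map_mul]
      _ = Ui * ((φ (E i j * Matrix.scalar (Fin n) r)) * U) := by
          rw [hEdef]; simp only []; rw [scalar_comm_stdBasis]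
      _ = Ui * ((f i j * φ (Matrix.scalar (Fin n) r)) * U) := by
          rw [hfdef]; simp only []; rw [← _root_.map_mul]
      _ = (Ui * f i j) * (φ (Matrix.scalar (Fin n) r) * U) := by simp only [mul_assoc]
      _ = (E i j * Ui) * (φ (Matrix.scalar (Fin n) r) * U) := by rw [e2]
      _ = E i j * (Ui * φ (Matrix.scalar (Fin n) r) * U) := by simp only [mul_assoc]
  have hα : ∀ r, Ui * φ (Matrix.scalar (Fin n) r) * U = Matrix.scalar (Fin n) (αf r) :=
    fun r => central_of_comm_stdBasis _ 0 (hcommα r)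
  have hφscalar : ∀ r, φ (Matrix.scalar (Fin n) r) = U * Matrix.scalar (Fin n) (αf r) * Ui := by
    intro r
    rw [← hα r]
    calc φ (Matrix.scalar (Fin n) r)
        = (U * Ui) * φ (Matrix.scalar (Fin n) r) * (U * Ui) := by rw [hUUi, one_mul, mul_one]
      _ = U * (Ui * φ (Matrix.scalar (Fin n) r) * U) * Ui := by simp only [mul_assoc]
  -- the inverse map
  set βf : R → R := fun r => (φ.symm (U * Matrix.scalar (Fin n) r * Ui)) 0 0 with hβfdef
  have hcommβ : ∀ (r : R) (i j : Fin n),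
      (φ.symm (U * Matrix.scalar (Fin n) r * Ui)) * Matrix.single i j (1 : R)
        = Matrix.single i j (1 : R) * (φ.symm (U * Matrix.scalar (Fin n) r * Ui)) := by
    intro r i j
    have eE : Matrix.single i j (1 : R) = E i j := by rw [hEdef]
    have hsymmf : φ.symm (f i j) = E i j := by
      rw [hfdef]; simp only []; rw [AlgEquiv.symm_apply_apply]
    have conj_mul : ∀ A B : Matrix (Fin n) (Fin n) R,
        (U * A * Ui) * (U * B * Ui) = U * (A * B) * Ui := by
      intro A B
      calc (U * A * Ui) * (U * B * Ui) = U * (A * ((Ui * U) * (B * Ui))) := by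
            simp only [mul_assoc]
        _ = U * (A * B) * Ui := by rw [hUiU, one_mul]; simp only [mul_assoc]
    rw [eE]
    calc (φ.symm (U * Matrix.scalar (Fin n) r * Ui)) * E i j
        = (φ.symm (U * Matrix.scalar (Fin n) r * Ui)) * φ.symm (f i j) := by rw [hsymmf]
      _ = φ.symm ((U * Matrix.scalar (Fin n) r * Ui) * f i j) := by rw [← _root_.map_mul]
      _ = φ.symm ((U * Matrix.scalar (Fin n) r * Ui) * (U * E i j * Ui)) := by rw [← hconj]
      _ = φ.symm (U * (Matrix.scalar (Fin n) r * E i j) * Ui) := by rw [conj_mul]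
      _ = φ.symm (U * (E i j * Matrix.scalar (Fin n) r) * Ui) := by
          rw [hEdef]; simp only []; rw [scalar_comm_stdBasis]
      _ = φ.symm ((U * E i j * Ui) * (U * Matrix.scalar (Fin n) r * Ui)) := by rw [conj_mul]
      _ = φ.symm (f i j * (U * Matrix.scalar (Fin n) r * Ui)) := by rw [← hconj]
      _ = φ.symm (f i j) * φ.symm (U * Matrix.scalar (Fin n) r * Ui) := by
          rw [← _root_.map_mul]
      _ = E i j * φ.symm (U * Matrix.scalar (Fin n) r * Ui) := by rw [hsymmf]
  have hβ : ∀ r, (φ.symm (U * Matrix.scalar (Fin n) r * Ui) : Matrix (Fin n) (Fin n) R)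
      = Matrix.scalar (Fin n) (βf r) :=
    fun r => central_of_comm_stdBasis _ 0 (hcommβ r)
  -- βf is a two-sided inverse of αf
  have hβα : ∀ r, βf (αf r) = r := by
    intro r
    have h1 : Matrix.scalar (Fin n) (βf (αf r)) = Matrix.scalar (Fin n) r := by
      rw [← hβ, ← hφscalar, AlgEquiv.symm_apply_apply]
    exact Matrix.scalar_inj.mp h1
  have hαβ : ∀ r, αf (βf r) = r := by
    intro r
    have h1 : Matrix.scalar (Fin n) (αf (βf r)) = Matrix.scalar (Fin n) r := by
      rw [← hα]
      rw [show Matrix.scalar (Fin n) (βf r) = φ.symm (U * Matrix.scalar (Fin n) r * Ui) from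
        (hβ r).symm]
      rw [AlgEquiv.apply_symm_apply]
      calc Ui * (U * Matrix.scalar (Fin n) r * Ui) * U
          = (Ui * U) * Matrix.scalar (Fin n) r * (Ui * U) := by simp only [mul_assoc]
        _ = Matrix.scalar (Fin n) r := by rw [hUiU, one_mul, mul_one]
    exact Matrix.scalar_inj.mp h1
  -- αf is a T-algebra homomorphism
  have hadd : ∀ r r', αf (r + r') = αf r + αf r' := by
    intro r r'
    have h1 : Matrix.scalar (Fin n) (αf (r + r'))
        = Matrix.scalar (Fin n) (αf r + αf r') := by
      rw [_root_.map_add (Matrix.scalar (Fin n)), ← hα, ← hα, ← hα,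
        _root_.map_add (Matrix.scalar (Fin n)), _root_.map_add φ, mul_add, add_mul]
    exact Matrix.scalar_inj.mp h1
  have hmul : ∀ r r', αf (r * r') = αf r * αf r' := by
    intro r r'
    have key : (Ui * φ (Matrix.scalar (Fin n) r) * U) * (Ui * φ (Matrix.scalar (Fin n) r') * U)
        = Ui * (φ (Matrix.scalar (Fin n) r) * φ (Matrix.scalar (Fin n) r')) * U := by
      calc (Ui * φ (Matrix.scalar (Fin n) r) * U) * (Ui * φ (Matrix.scalar (Fin n) r') * U)
          = Ui * (φ (Matrix.scalar (Fin n) r) * ((U * Ui) * (φ (Matrix.scalar (Fin n) r') * U)))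
            := by simp only [mul_assoc]
        _ = Ui * (φ (Matrix.scalar (Fin n) r) * (φ (Matrix.scalar (Fin n) r') * U)) := by
            rw [hUUi, one_mul]
        _ = Ui * (φ (Matrix.scalar (Fin n) r) * φ (Matrix.scalar (Fin n) r')) * U := by
            simp only [mul_assoc]
    have h1 : Matrix.scalar (Fin n) (αf (r * r'))
        = Matrix.scalar (Fin n) (αf r * αf r') := by
      rw [_root_.map_mul (Matrix.scalar (Fin n)), ← hα (r * r'), ← hα r, ← hα r',
        _root_.map_mul (Matrix.scalar (Fin n)), _root_.map_mul φ, key]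
    exact Matrix.scalar_inj.mp h1
  have hcommutes : ∀ c : T, αf (algebraMap T R c) = algebraMap T R c := by
    intro c
    have hscalarmap : Matrix.scalar (Fin n) (algebraMap T R c)
        = algebraMap T (Matrix (Fin n) (Fin n) R) c := by
      rw [Matrix.scalar_apply, Matrix.algebraMap_eq_diagonal]
      rfl
    have h1 : Matrix.scalar (Fin n) (αf (algebraMap T R c))
        = Matrix.scalar (Fin n) (algebraMap T R c) := by
      rw [← hα (algebraMap T R c), hscalarmap, AlgEquiv.commutes]
      calc Ui * algebraMap T (Matrix (Fin n) (Fin n) R) c * U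
          = Ui * (U * algebraMap T (Matrix (Fin n) (Fin n) R) c) := by
            rw [← Algebra.commutes c U, mul_assoc]
        _ = algebraMap T (Matrix (Fin n) (Fin n) R) c := by rw [← mul_assoc, hUiU, one_mul]
    exact Matrix.scalar_inj.mp h1
  -- assemble the algebra automorphism
  refine ⟨u, ⟨⟨αf, βf, hβα, hαβ⟩, hmul, hadd, hcommutes⟩, ?_⟩
  intro A
  have hφE : ∀ (i j : Fin n) (r : R),
      φ (Matrix.single i j r) = U * Matrix.single i j (αf r) * Ui := by
    intro i j r
    have conj_mul : ∀ A B : Matrix (Fin n) (Fin n) R,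
        (U * A * Ui) * (U * B * Ui) = U * (A * B) * Ui := by
      intro A B
      calc (U * A * Ui) * (U * B * Ui) = U * (A * ((Ui * U) * (B * Ui))) := by
            simp only [mul_assoc]
        _ = U * (A * (B * Ui)) := by rw [hUiU, one_mul]
        _ = U * (A * B) * Ui := by simp only [mul_assoc]
    calc φ (Matrix.single i j r)
        = φ (Matrix.scalar (Fin n) r * E i j) := by
          rw [hEdef]; simp only []; rw [← stdBasis_eq_scalar_mul]
      _ = φ (Matrix.scalar (Fin n) r) * f i j := by
          rw [hfdef]; simp only []; rw [← _root_.map_mul]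
      _ = (U * Matrix.scalar (Fin n) (αf r) * Ui) * (U * E i j * Ui) := by
          rw [hφscalar, ← hconj]
      _ = U * (Matrix.scalar (Fin n) (αf r) * E i j) * Ui := by rw [conj_mul]
      _ = U * Matrix.single i j (αf r) * Ui := by
          rw [hEdef]; simp only []; rw [← stdBasis_eq_scalar_mul]
  have hmap : A.map αf = ∑ i, ∑ j, Matrix.single i j (αf (A i j)) := by
    conv_lhs => rw [matrix_eq_sum_single (A.map αf)]
    apply Finset.sum_congr rfl
    intro i _
    apply Finset.sum_congr rfl
    intro j _
    rw [Matrix.map_apply]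
  show φ A = U * A.map αf * Ui
  calc φ A = φ (∑ i, ∑ j, Matrix.single i j (A i j)) := by
        rw [← matrix_eq_sum_single]
    _ = ∑ i, ∑ j, φ (Matrix.single i j (A i j)) := by
        rw [_root_.map_sum]
        apply Finset.sum_congr rfl
        intro i _
        rw [_root_.map_sum]
    _ = ∑ i, ∑ j, U * Matrix.single i j (αf (A i j)) * Ui := by
        apply Finset.sum_congr rfl
        intro i _
        apply Finset.sum_congr rfl
        intro j _
        rw [hφE]
    _ = U * (∑ i, ∑ j, Matrix.single i j (αf (A i j))) * Ui := by
        simp only [Finset.mul_sum, Finset.sum_mul]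
    _ = U * A.map αf * Ui := by rw [← hmap]
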